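/- Let s, y ∈ ℝⁿ satisfy sᵀy ≥ γ‖s‖² with γ > 0 and ‖y‖ ≤ L_y‖s‖ with L_y > 0, let μ > 0, ρ = 1/(sᵀy), V = I − ρ s yᵀ, and A = μVVᵀ + ρ s sᵀ. Then A is symmetric positive definite and λ_min(A) ≥ min(1/L_y, μ/(1 + (μ/γ)L_y²)) > 0. -/

import Mathlib

open Matrix
open scoped Matrix

lemma vmv_mulVec {n : ℕ} (a b x : Fin n → ℝ) :
    vecMulVec a b *ᵥ x = (b ⬝ᵥ x) • a := by
  ext i
  simp [vecMulVec_apply, mulVec, dotProduct, Finset.mul_sum, mul_comm, mul_left_comm]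

set_option maxHeartbeats 1600000 in
theorem stmt_8 {n : ℕ} (s y : Fin n → ℝ) (γ Ly μ ρ : ℝ)
    (hγ : 0 < γ) (hLy : 0 < Ly) (hμ : 0 < μ) (hs : s ≠ 0)
    (hsy : s ⬝ᵥ y ≥ γ * (s ⬝ᵥ s))
    (hy : Real.sqrt (y ⬝ᵥ y) ≤ Ly * Real.sqrt (s ⬝ᵥ s))
    (hρ : ρ = 1 / (s ⬝ᵥ y))
    (V A : Matrix (Fin n) (Fin n) ℝ)
    (hV : V = 1 - ρ • vecMulVec s y)
    (hA : A = μ • (V * Vᵀ) + ρ • vecMulVec s s)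
    (hAh : A.IsHermitian) :
    A.PosDef ∧ 0 < min (1 / Ly) (μ / (1 + (μ / γ) * Ly ^ 2)) ∧
      ∀ i, min (1 / Ly) (μ / (1 + (μ / γ) * Ly ^ 2)) ≤ hAh.eigenvalues i := by
  have hns0 : 0 ≤ s ⬝ᵥ s := Finset.sum_nonneg fun i _ => mul_self_nonneg _
  have hns : 0 < s ⬝ᵥ s :=
    lt_of_le_of_ne hns0 (Ne.symm (fun h => hs (dotProduct_self_eq_zero.mp h)))
  have hσ : 0 < s ⬝ᵥ y := lt_of_lt_of_le (by positivity) hsy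
  have hb0 : 0 ≤ y ⬝ᵥ y := Finset.sum_nonneg fun i _ => mul_self_nonneg _
  have hb : y ⬝ᵥ y ≤ Ly ^ 2 * (s ⬝ᵥ s) := by
    have h1 : Real.sqrt (y ⬝ᵥ y) ^ 2 = y ⬝ᵥ y := Real.sq_sqrt hb0
    have h2 : Real.sqrt (s ⬝ᵥ s) ^ 2 = s ⬝ᵥ s := Real.sq_sqrt hns0
    nlinarith [Real.sqrt_nonneg (y ⬝ᵥ y), Real.sqrt_nonneg (s ⬝ᵥ s)]
  have h3 : γ * (y ⬝ᵥ y) ≤ Ly ^ 2 * (s ⬝ᵥ y) := by nlinarith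
  have hT : 0 < 1 + μ / γ * Ly ^ 2 := by positivity
  have hc : 0 < μ / (1 + μ / γ * Ly ^ 2) := by positivity
  -- quadratic form expansion
  have hVt : ∀ x : Fin n → ℝ, Vᵀ *ᵥ x = x - (ρ * (s ⬝ᵥ x)) • y := by
    intro x
    have htr : (vecMulVec s y)ᵀ = vecMulVec y s := by
      ext i j; simp [vecMulVec_apply, transpose_apply, mul_comm]
    rw [hV, transpose_sub, transpose_smul, transpose_one, sub_mulVec, one_mulVec,
      smul_mulVec, htr, vmv_mulVec, smul_smul]
  have hq : ∀ x : Fin n → ℝ,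
      x ⬝ᵥ A *ᵥ x = μ * ((Vᵀ *ᵥ x) ⬝ᵥ (Vᵀ *ᵥ x)) + ρ * (s ⬝ᵥ x) ^ 2 := by
    intro x
    rw [hA, add_mulVec, smul_mulVec, smul_mulVec, dotProduct_add,
      dotProduct_smul, dotProduct_smul, ← mulVec_mulVec, dotProduct_mulVec,
      ← mulVec_transpose, vmv_mulVec, dotProduct_smul]
    simp [smul_eq_mul, dotProduct_comm x s, sq]
  -- key quadratic-form lower bound
  have key : ∀ x : Fin n → ℝ,
      μ / (1 + μ / γ * Ly ^ 2) * (x ⬝ᵥ x) ≤ x ⬝ᵥ A *ᵥ x := by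
    intro x
    rw [hq x, hVt x, hρ]
    set σ := s ⬝ᵥ y with hσdef
    set α := s ⬝ᵥ x with hαdef
    set u : Fin n → ℝ := x - (1 / σ * α) • y with hudef
    have ha : 0 ≤ u ⬝ᵥ u := Finset.sum_nonneg fun i _ => mul_self_nonneg _
    set a := u ⬝ᵥ u with hadef
    set d := u ⬝ᵥ y with hddef
    set b := y ⬝ᵥ y with hbdef
    have hident : σ • x = σ • u + α • y := by
      rw [hudef, smul_sub, smul_smul]
      field_simp
      rw [sub_add_cancel]
    have hX : σ ^ 2 * (x ⬝ᵥ x) = σ ^ 2 * a + 2 * σ * α * d + α ^ 2 * b := by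
      have h := congrArg (fun v : Fin n → ℝ => v ⬝ᵥ v) hident
      simp only [dotProduct_add, add_dotProduct, smul_dotProduct, dotProduct_smul,
        smul_eq_mul, dotProduct_comm y u] at h
      nlinarith [h]
    have hCS : 0 ≤ (μ * Ly ^ 2 * σ) ^ 2 * a - 2 * (μ * Ly ^ 2 * σ) * (γ * α) * d
        + (γ * α) ^ 2 * b := by
      have h0 : 0 ≤ ((μ * Ly ^ 2 * σ) • u - (γ * α) • y) ⬝ᵥ
          ((μ * Ly ^ 2 * σ) • u - (γ * α) • y) :=
        Finset.sum_nonneg fun i _ => mul_self_nonneg _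
      simp only [dotProduct_sub, sub_dotProduct, smul_dotProduct, dotProduct_smul,
        smul_eq_mul, dotProduct_comm y u] at h0
      nlinarith [h0]
    have e : (μ * a + 1 / σ * α ^ 2) * (1 + μ / γ * Ly ^ 2)
        = (Ly ^ 2 * σ * ((γ + μ * Ly ^ 2) * (μ * a * σ + α ^ 2))) / (γ * σ ^ 2 * Ly ^ 2) := by
      field_simp
    rw [div_mul_eq_mul_div, div_le_iff₀ hT, e, le_div_iff₀ (by positivity)]
    have hp : 0 ≤ (γ + μ * Ly ^ 2) * (α ^ 2 * (Ly ^ 2 * σ - γ * b)) :=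
      mul_nonneg (by positivity) (mul_nonneg (sq_nonneg α) (by linarith))
    have hX2 : μ * γ * Ly ^ 2 * (σ ^ 2 * (x ⬝ᵥ x))
        = μ * γ * Ly ^ 2 * (σ ^ 2 * a + 2 * σ * α * d + α ^ 2 * b) := by rw [hX]
    nlinarith [hCS, hp, hX2, sq_nonneg σ, mul_pos hμ hγ]
  have hpd : A.PosDef := by
    refine .of_dotProduct_mulVec_pos hAh fun x hx => ?_
    have hx2 : 0 < x ⬝ᵥ x :=
      lt_of_le_of_ne (Finset.sum_nonneg fun i _ => mul_self_nonneg _)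
        (Ne.symm fun h => hx (dotProduct_self_eq_zero.mp h))
    have := key x
    have : 0 < x ⬝ᵥ A *ᵥ x := lt_of_lt_of_le (by positivity) this
    simpa using this
  refine ⟨hpd, lt_min (by positivity) (by simpa using hc), fun i => ?_⟩
  have hmin : min (1 / Ly) (μ / (1 + (μ / γ) * Ly ^ 2)) ≤ μ / (1 + μ / γ * Ly ^ 2) :=
    min_le_right _ _
  set v : EuclideanSpace ℝ (Fin n) := hAh.eigenvectorBasis i with hv
  have hvv : (v : Fin n → ℝ) ⬝ᵥ (v : Fin n → ℝ) = 1 := by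
    have h1 : ‖v‖ = 1 := hAh.eigenvectorBasis.orthonormal.1 i
    have h2 : (inner ℝ v v : ℝ) = ‖v‖ ^ 2 := real_inner_self_eq_norm_sq v
    rw [h1] at h2
    have h4 : (inner ℝ v v : ℝ) = 1 := by rw [h2]; norm_num
    rw [← h4]
    simp only [PiLp.inner_apply, RCLike.inner_apply, conj_trivial, dotProduct, mul_comm]
  have hkey := key (v : Fin n → ℝ)
  have hm : A *ᵥ (v : Fin n → ℝ) = hAh.eigenvalues i • (v : Fin n → ℝ) :=
    hAh.mulVec_eigenvectorBasis i
  rw [hm] at hkey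
  rw [dotProduct_smul, smul_eq_mul, hvv, mul_one] at hkey
  linarith [hmin, hkey]
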